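/- Let α ∈ ℝ with −1 < α < 0. Then: (i) for every multi-index β there exist a, b, c ∈ ℕ such that |β| = (α+1)a + b − αc + α; (ii) for every r ∈ ℝ the set of multi-indices {β : |β| ≤ r} is finite, so in particular every bounded interval of ℝ contains only finitely many values of the homogeneity; (iii) |β| ≥ α for every multi-index β, and |β| = α if and only if β = 0. -/

import Mathlib

/-- Multi-indices: finitely supported functions from `{g} ⊔ ℕ⁴` to `ℕ`. -/
abbrev MIdx : Type := (Unit ⊕ (Fin 4 → ℕ)) →₀ ℕ

/-- Parabolic degree of an element of `ℕ⁴`: `|n| = 2n₀ + n₁ + n₂ + n₃`. -/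
def pdeg (n : Fin 4 → ℕ) : ℕ := 2 * n 0 + n 1 + n 2 + n 3

/-- The homogeneity `|β| = (α+1)β(g) + Σ_{n∈ℕ⁴} β(n)(|n| − α) + α` of a multi-index. -/
noncomputable def homog (α : ℝ) (β : MIdx) : ℝ :=
  (α + 1) * (β (Sum.inl ()) : ℝ) +
    (β.sum fun k m =>
      match k with
      | Sum.inl _ => (0 : ℝ)
      | Sum.inr n => (m : ℝ) * ((pdeg n : ℝ) - α)) + α

noncomputable def Fh (α : ℝ) : (Unit ⊕ (Fin 4 → ℕ)) → ℕ → ℝ :=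
  fun k m => match k with
    | Sum.inl _ => (0 : ℝ)
    | Sum.inr n => (m : ℝ) * ((pdeg n : ℝ) - α)

lemma homog_eq (α : ℝ) (β : MIdx) :
    homog α β = (α + 1) * (β (Sum.inl ()) : ℝ) + β.sum (Fh α) + α := rfl

lemma Fh_nonneg {α : ℝ} (hα₂ : α < 0) (k : Unit ⊕ (Fin 4 → ℕ)) (m : ℕ) :
    0 ≤ Fh α k m := by
  cases k with
  | inl _ => simp [Fh]
  | inr n =>
    apply mul_nonneg (Nat.cast_nonneg _)
    have : (0:ℝ) ≤ (pdeg n : ℝ) := Nat.cast_nonneg _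
    linarith

lemma sum_Fh_nonneg {α : ℝ} (hα₂ : α < 0) (β : MIdx) : 0 ≤ β.sum (Fh α) :=
  Finset.sum_nonneg fun k _ => Fh_nonneg hα₂ k (β k)

lemma Fh_le_sum {α : ℝ} (hα₂ : α < 0) (β : MIdx) (k : Unit ⊕ (Fin 4 → ℕ)) :
    Fh α k (β k) ≤ β.sum (Fh α) := by
  by_cases hk : k ∈ β.support
  · exact Finset.single_le_sum (fun j _ => Fh_nonneg hα₂ j (β j)) hk
  · have : β k = 0 := Finsupp.notMem_support_iff.mp hk
    rw [this]
    have h0 : Fh α k 0 = 0 := by cases k <;> simp [Fh]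
    rw [h0]
    exact sum_Fh_nonneg hα₂ β

theorem homogeneity_structure (α : ℝ) (hα₁ : -1 < α) (hα₂ : α < 0) :
    (∀ β : MIdx, ∃ a b c : ℕ,
        homog α β = (α + 1) * (a : ℝ) + (b : ℝ) - α * (c : ℝ) + α) ∧
    (∀ r : ℝ, {β : MIdx | homog α β ≤ r}.Finite) ∧
    (∀ a b : ℝ, {t : ℝ | (∃ β : MIdx, homog α β = t) ∧ a < t ∧ t < b}.Finite) ∧
    (∀ β : MIdx, α ≤ homog α β) ∧
    (∀ β : MIdx, homog α β = α ↔ β = 0) := by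
  have hα1 : (0:ℝ) < α + 1 := by linarith
  have hαneg : (0:ℝ) < -α := by linarith
  -- part (ii) first
  have part2 : ∀ r : ℝ, {β : MIdx | homog α β ≤ r}.Finite := by
    intro r
    set c : ℝ := min (α + 1) (min (-α) 1) with hc
    have hcpos : 0 < c := by
      apply lt_min hα1; exact lt_min hαneg one_pos
    have hc1 : c ≤ α + 1 := min_le_left _ _
    have hc2 : c ≤ -α := le_trans (min_le_right _ _) (min_le_left _ _)
    have hc3 : c ≤ 1 := le_trans (min_le_right _ _) (min_le_right _ _)
    set M : ℕ := ⌈(r - α) / c⌉₊ with hM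
    -- key bound: x * c ≤ r - α → x ≤ M for real casts of naturals
    have key : ∀ m : ℕ, (m : ℝ) * c ≤ r - α → m ≤ M := by
      intro m hm
      have : (m : ℝ) ≤ (r - α) / c := (le_div_iff₀ hcpos).mpr hm
      have := this.trans (Nat.le_ceil _)
      exact_mod_cast this
    set T : Finset (Unit ⊕ (Fin 4 → ℕ)) :=
      {Sum.inl ()} ∪ (Fintype.piFinset fun _ : Fin 4 => Finset.range (M + 1)).image Sum.inr
      with hT
    set γ : MIdx := Finsupp.indicator T (fun _ _ => M) with hγ
    apply Set.Finite.subset (Set.finite_Icc 0 γ)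
    intro β hβ
    simp only [Set.mem_setOf_eq] at hβ
    have hsum : (α + 1) * (β (Sum.inl ()) : ℝ) + β.sum (Fh α) ≤ r - α := by
      have := homog_eq α β; linarith
    have hglb : (α + 1) * (β (Sum.inl ()) : ℝ) ≤ r - α := by
      have := sum_Fh_nonneg hα₂ β; linarith
    have hterm : ∀ k, Fh α k (β k) ≤ r - α := by
      intro k
      have h1 := Fh_le_sum hα₂ β k
      have h2 : (0:ℝ) ≤ (α + 1) * (β (Sum.inl ()) : ℝ) :=
        mul_nonneg (le_of_lt hα1) (Nat.cast_nonneg _)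
      linarith
    constructor
    · exact zero_le
    · intro k
      cases k with
      | inl u =>
        cases u
        have hle : (β (Sum.inl ()) : ℝ) * c ≤ r - α := by
          have : (β (Sum.inl ()) : ℝ) * c ≤ (α + 1) * (β (Sum.inl ()) : ℝ) := by
            rw [mul_comm]
            exact mul_le_mul_of_nonneg_right hc1 (Nat.cast_nonneg _)
          linarith
        have hβM := key _ hle
        have hmem : Sum.inl () ∈ T := by simp [hT]
        calc β (Sum.inl ()) ≤ M := hβM
          _ = γ (Sum.inl ()) := by
            rw [hγ, Finsupp.indicator_apply]; simp [hmem]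
      | inr n =>
        by_cases hz : β (Sum.inr n) = 0
        · rw [hz]; exact Nat.zero_le _
        · have hb1 : (1:ℝ) ≤ (β (Sum.inr n) : ℝ) := by
            exact_mod_cast Nat.one_le_iff_ne_zero.mpr hz
          have hpd : (0:ℝ) ≤ (pdeg n : ℝ) := Nat.cast_nonneg _
          have ht := hterm (Sum.inr n)
          simp only [Fh] at ht
          -- β n ≤ M
          have hβM : β (Sum.inr n) ≤ M := by
            apply key
            have : (β (Sum.inr n) : ℝ) * c ≤ (β (Sum.inr n) : ℝ) * ((pdeg n : ℝ) - α) := by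
              apply mul_le_mul_of_nonneg_left _ (Nat.cast_nonneg _)
              linarith
            linarith
          -- pdeg n ≤ M
          have hpM : pdeg n ≤ M := by
            apply key
            have h1 : ((pdeg n : ℝ)) * c ≤ (pdeg n : ℝ) - α := by
              nlinarith
            have h2 : (pdeg n : ℝ) - α ≤ (β (Sum.inr n) : ℝ) * ((pdeg n : ℝ) - α) := by
              nlinarith
            linarith
          have hmem : Sum.inr n ∈ T := by
            simp only [hT, Finset.mem_union, Finset.mem_image, Finset.mem_singleton]
            right
            refine ⟨n, ?_, rfl⟩
            rw [Fintype.mem_piFinset]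
            intro i
            rw [Finset.mem_range]
            have : n i ≤ pdeg n := by
              fin_cases i <;> simp [pdeg] <;> omega
            omega
          calc β (Sum.inr n) ≤ M := hβM
            _ = γ (Sum.inr n) := by
              rw [hγ, Finsupp.indicator_apply]; simp [hmem]
  have part4 : ∀ β : MIdx, α ≤ homog α β := by
    intro β
    rw [homog_eq]
    have h1 := sum_Fh_nonneg hα₂ β
    have h2 : (0:ℝ) ≤ (α + 1) * (β (Sum.inl ()) : ℝ) :=
      mul_nonneg (by linarith) (Nat.cast_nonneg _)
    linarith
  refine ⟨?_, part2, ?_, part4, ?_⟩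
  · -- part (i)
    intro β
    refine ⟨β (Sum.inl ()), β.sum fun k m => match k with
        | Sum.inl _ => 0 | Sum.inr n => m * pdeg n,
      β.sum fun k m => match k with
        | Sum.inl _ => 0 | Sum.inr n => m, ?_⟩
    rw [homog_eq]
    have : β.sum (Fh α)
        = ((β.sum fun k m => match k with
            | Sum.inl _ => 0 | Sum.inr n => m * pdeg n : ℕ) : ℝ)
          - α * ((β.sum fun k m => match k with
            | Sum.inl _ => 0 | Sum.inr n => m : ℕ) : ℝ) := by
      rw [Finsupp.sum, Finsupp.sum, Finsupp.sum, Nat.cast_sum, Nat.cast_sum,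
        Finset.mul_sum, ← Finset.sum_sub_distrib]
      apply Finset.sum_congr rfl
      intro k _
      cases k with
      | inl u => simp [Fh]
      | inr n => simp only [Fh]; push_cast; ring
    rw [this]; ring
  · -- part (iii)
    intro a b
    apply Set.Finite.subset ((part2 b).image (homog α))
    rintro t ⟨⟨β, hβ⟩, _, htb⟩
    exact ⟨β, by simp [Set.mem_setOf_eq, hβ]; linarith, hβ⟩
  · -- part (v)
    intro β
    constructor
    · intro h
      rw [homog_eq] at h
      have hsum0 : (α + 1) * (β (Sum.inl ()) : ℝ) + β.sum (Fh α) = 0 := by linarith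
      have h1 : (0:ℝ) ≤ (α + 1) * (β (Sum.inl ()) : ℝ) :=
        mul_nonneg (by linarith) (Nat.cast_nonneg _)
      have h2 := sum_Fh_nonneg hα₂ β
      have hg0 : (α + 1) * (β (Sum.inl ()) : ℝ) = 0 := by linarith
      have hgl : β (Sum.inl ()) = 0 := by
        have : (β (Sum.inl ()) : ℝ) = 0 := by
          rcases mul_eq_zero.mp hg0 with h | h
          · linarith
          · exact h
        exact_mod_cast this
      have hS0 : β.sum (Fh α) = 0 := by linarith
      have heach := (Finset.sum_eq_zero_iff_of_nonneg
        (fun k _ => Fh_nonneg hα₂ k (β k))).mp hS0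
      ext k
      cases k with
      | inl u => cases u; simpa using hgl
      | inr n =>
        by_contra hne
        have hk : Sum.inr n ∈ β.support := Finsupp.mem_support_iff.mpr (by simpa using hne)
        have := heach _ hk
        simp only [Fh] at this
        rcases mul_eq_zero.mp this with h | h
        · exact hne (by exact_mod_cast h)
        · have hpd : (0:ℝ) ≤ (pdeg n : ℝ) := Nat.cast_nonneg _
          linarith
    · intro h
      subst h
      simp [homog_eq, Finsupp.sum_zero_index]
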